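/- arXiv:math/0302313 — 2 statements merged into one kernel-verified Lean document; each statement's English description precedes it below -/
import Mathlib

section
/- For a partition [n] = R ∪ S ∪ T into disjoint subsets, the Alexander dual (within R) of the complex Δ_R^{S,T} equals (Δ*)_R^{T,S}, i.e. (Δ_R^{S,T})* = (Δ*)_R^{T,S}. -/
open Finset

namespace SCx

variable (k : Type) [Field k] {n : ℕ}

/-- An (abstract) simplicial complex on the vertex set `Fin n`:
a set of finsets closed under taking subsets. -/
def IsComplex (Δ : Set (Finset (Fin n))) : Prop :=
  ∀ F ∈ Δ, ∀ G ⊆ F, G ∈ Δ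

/-- Simplicial `p`-chains with coefficients in `k`: functions on the faces of
cardinality `p+1`. -/
abbrev Chains (Δ : Set (Finset (Fin n))) (p : ℤ) : Type :=
  {F : Finset (Fin n) // F ∈ Δ ∧ (F.card : ℤ) = p + 1} → k

open Classical in
/-- The underlying function of the simplicial boundary map, written via its
transpose formula:
`(∂ f) G = ∑_{x : insert x G ∈ Δ} (-1)^{pos of x in insert x G} f (insert x G)`. -/
noncomputable def boundaryFun (Δ : Set (Finset (Fin n))) (p : ℤ)
    (f : Chains k Δ p) : Chains k Δ (p - 1) := fun G => ∑ x : Fin n,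
  if h : x ∉ G.1 ∧ insert x G.1 ∈ Δ then
    (-1 : k) ^ (G.1.filter (fun y => y < x)).card *
      f ⟨insert x G.1, h.2, by
        have hc := G.2.2
        rw [Finset.card_insert_of_notMem h.1]
        push_cast at hc ⊢
        omega⟩
  else 0

/-- The simplicial boundary map. -/
noncomputable def boundary (Δ : Set (Finset (Fin n))) (p : ℤ) :
    Chains k Δ p →ₗ[k] Chains k Δ (p - 1) where
  toFun := boundaryFun k Δ p
  map_add' f g := by
    funext G
    unfold boundaryFun
    rw [Pi.add_apply]
    rw [← Finset.sum_add_distrib]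
    refine Finset.sum_congr rfl fun x _ => ?_
    split_ifs with h
    · rw [Pi.add_apply]; ring
    · rw [add_zero]
  map_smul' c f := by
    funext G
    unfold boundaryFun
    simp only [RingHom.id_apply, Pi.smul_apply, smul_eq_mul, Finset.mul_sum]
    refine Finset.sum_congr rfl fun x _ => ?_
    split_ifs with h
    · ring
    · rw [mul_zero]

/-- Transport of chains along an equality of degrees. -/
noncomputable def chainsCongr (Δ : Set (Finset (Fin n))) {p q : ℤ} (h : p = q) :
    Chains k Δ p ≃ₗ[k] Chains k Δ q := by
  subst h; exact LinearEquiv.refl k _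

noncomputable def cycles (Δ : Set (Finset (Fin n))) (p : ℤ) : Submodule k (Chains k Δ p) :=
  LinearMap.ker (boundary k Δ p)

noncomputable def boundaries (Δ : Set (Finset (Fin n))) (p : ℤ) : Submodule k (Chains k Δ p) :=
  LinearMap.range ((chainsCongr k Δ (show p + 1 - 1 = p by ring)).toLinearMap ∘ₗ
    boundary k Δ (p + 1))

/-- Reduced simplicial homology of `Δ` in degree `p`, with coefficients in the field `k`,
defined as cycles modulo (boundaries intersected with cycles).  With this convention
`H̃_{-1}({∅}) = k`. -/
abbrev ReducedHomology (Δ : Set (Finset (Fin n))) (p : ℤ) :=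
  ↥(cycles k Δ p) ⧸ (Submodule.comap (cycles k Δ p).subtype (boundaries k Δ p))

/-- The Alexander dual of `Δ`. -/
def dual (Δ : Set (Finset (Fin n))) : Set (Finset (Fin n)) := {F | Fᶜ ∉ Δ}

/-- The restriction `Δ_R` of `Δ` to a vertex subset `R`. -/
def restrict (Δ : Set (Finset (Fin n))) (R : Finset (Fin n)) : Set (Finset (Fin n)) :=
  {F | F ∈ Δ ∧ F ⊆ R}

/-- The link `lk_Δ S`. -/
def link (Δ : Set (Finset (Fin n))) (S : Finset (Fin n)) : Set (Finset (Fin n)) :=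
  {F | Disjoint F S ∧ F ∪ S ∈ Δ}

/-- `Δ_R^{S,T} = {F ⊆ R : F ∪ S ∈ Δ}` (for `T` the complement of `R ∪ S`). -/
def sub (Δ : Set (Finset (Fin n))) (R S : Finset (Fin n)) : Set (Finset (Fin n)) :=
  {F | F ⊆ R ∧ F ∪ S ∈ Δ}

/-- `Δ` has dimension `d - 1`, i.e. `d` is the maximal cardinality of a face. -/
def IsDim (Δ : Set (Finset (Fin n))) (d : ℕ) : Prop :=
  (∀ F ∈ Δ, F.card ≤ d) ∧ ∃ F ∈ Δ, F.card = d

/-- `Δ` has frame dimension `c - 1`, i.e. `c` is the largest integer such that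
every `c`-subset of `[n]` is a face of `Δ`. -/
def IsFrame (Δ : Set (Finset (Fin n))) (c : ℕ) : Prop :=
  (∀ F : Finset (Fin n), F.card ≤ c → F ∈ Δ) ∧
    ∃ F : Finset (Fin n), F.card = c + 1 ∧ F ∉ Δ

/-- A facet: a maximal face. -/
def IsFacet (Δ : Set (Finset (Fin n))) (F : Finset (Fin n)) : Prop :=
  F ∈ Δ ∧ ∀ G ∈ Δ, F ⊆ G → F = G

/-- `(Δ_R^{S,T})* = (Δ*)_R^{T,S}`, the Alexander dual being taken
within the vertex set `R`. -/
theorem stmt1 {n : ℕ} (Δ : Set (Finset (Fin n))) (hΔ : IsComplex Δ)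
    (R S T : Finset (Fin n)) (hRS : Disjoint R S) (hRT : Disjoint R T)
    (hST : Disjoint S T) (hcov : R ∪ S ∪ T = Finset.univ) :
    {F : Finset (Fin n) | F ⊆ R ∧ R \ F ∉ sub Δ R S} = sub (dual Δ) R T := by
  ext F
  simp only [Set.mem_setOf_eq, sub, dual, Set.mem_setOf_eq]
  constructor
  · rintro ⟨hFR, h⟩
    refine ⟨hFR, ?_⟩
    intro hmem
    apply h
    refine ⟨Finset.sdiff_subset, ?_⟩
    have key : (F ∪ T)ᶜ = (R \ F) ∪ S := by
      ext x
      have hx : x ∈ R ∪ S ∪ T := by rw [hcov]; exact Finset.mem_univ x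
      simp only [Finset.mem_compl, Finset.mem_union, Finset.mem_sdiff] at *
      constructor
      · intro hx2
        push_neg at hx2
        rcases hx with (hx | hx) | hx
        · exact Or.inl ⟨hx, hx2.1⟩
        · exact Or.inr hx
        · exact absurd hx hx2.2
      · rintro (⟨hxR, hxF⟩ | hxS)
        · push_neg
          exact ⟨hxF, Finset.disjoint_left.mp hRT hxR⟩
        · push_neg
          exact ⟨fun hxF => Finset.disjoint_left.mp hRS (hFR hxF) hxS,
            fun hxT => Finset.disjoint_left.mp hST hxS hxT⟩
    rwa [key] at hmem
  · rintro ⟨hFR, h⟩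
    refine ⟨hFR, ?_⟩
    rintro ⟨-, hmem⟩
    apply h
    have key : (F ∪ T)ᶜ = (R \ F) ∪ S := by
      ext x
      have hx : x ∈ R ∪ S ∪ T := by rw [hcov]; exact Finset.mem_univ x
      simp only [Finset.mem_compl, Finset.mem_union, Finset.mem_sdiff] at *
      constructor
      · intro hx2
        push_neg at hx2
        rcases hx with (hx | hx) | hx
        · exact Or.inl ⟨hx, hx2.1⟩
        · exact Or.inr hx
        · exact absurd hx hx2.2
      · rintro (⟨hxR, hxF⟩ | hxS)
        · push_neg
          exact ⟨hxF, Finset.disjoint_left.mp hRT hxR⟩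
        · push_neg
          exact ⟨fun hxF => Finset.disjoint_left.mp hRS (hFR hxF) hxS,
            fun hxT => Finset.disjoint_left.mp hST hxS hxT⟩
    rwa [key]

end SCx
end

section
/- If Δ is a simplicial complex on [n] that is neither the full (n-1)-simplex nor the empty complex, and c is the largest integer such that all c-subsets of [n] are faces of Δ, then there exists a face S of Δ with H̃_{c-1}(lk_Δ S) ≠ 0. -/
open Finset

namespace SCx

variable (k : Type) [Field k] {n : ℕ}

section Aux
variable {k : Type} [Field k] {n : ℕ}

noncomputable def sgn (k : Type) [Field k] {n : ℕ} (G : Finset (Fin n)) (x : Fin n) : k :=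
  (-1 : k) ^ (G.filter (fun y => y < x)).card

lemma sgn_sq (G : Finset (Fin n)) (x : Fin n) : sgn k G x * sgn k G x = 1 := by
  unfold sgn; rw [← pow_add]; exact Even.neg_one_pow ⟨_, rfl⟩

lemma sgn_ne_zero (G : Finset (Fin n)) (x : Fin n) : sgn k G x ≠ 0 := by
  intro h
  have h2 := sgn_sq (k := k) G x
  rw [h, mul_zero] at h2
  exact zero_ne_one h2

lemma sgn_key {G : Finset (Fin n)} {x v : Fin n} (hx : x ∉ G) (hv : v ∉ G) (hxv : x ≠ v) :
    sgn k G x * sgn k (insert x G) v + sgn k G v * sgn k (insert v G) x = 0 := by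
  have hfilt : ∀ a b : Fin n, a ∉ G →
      ((insert a G).filter (fun y => y < b)).card
        = (G.filter (fun y => y < b)).card + (if a < b then 1 else 0) := by
    intro a b ha
    rw [Finset.filter_insert]
    split_ifs with h
    · rw [Finset.card_insert_of_notMem (fun hm => ha (Finset.mem_filter.1 hm).1)]
    · rfl
  unfold sgn
  rw [hfilt x v hx, hfilt v x hv]
  rcases lt_or_gt_of_ne hxv with h | h
  · rw [if_pos h, if_neg (asymm h)]; rw [pow_add, pow_add]; ring
  · rw [if_neg (asymm h), if_pos h]; rw [pow_add, pow_add]; ring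

noncomputable def Dd (f : Finset (Fin n) → k) : Finset (Fin n) → k := fun G =>
  ∑ x : Fin n, if x ∉ G then sgn k G x * f (insert x G) else 0

noncomputable def iota (v : Fin n) (f : Finset (Fin n) → k) : Finset (Fin n) → k := fun G =>
  if v ∉ G then sgn k G v * f (insert v G) else 0

noncomputable def eps (v : Fin n) (f : Finset (Fin n) → k) : Finset (Fin n) → k := fun G =>
  if v ∈ G then sgn k (G.erase v) v * f (G.erase v) else 0

lemma Dd_apply (f : Finset (Fin n) → k) (G : Finset (Fin n)) :
    Dd f G = ∑ x : Fin n, if x ∉ G then sgn k G x * f (insert x G) else 0 := rfl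

lemma iota_apply (v : Fin n) (f : Finset (Fin n) → k) (G : Finset (Fin n)) :
    iota v f G = if v ∉ G then sgn k G v * f (insert v G) else 0 := rfl

lemma eps_apply (v : Fin n) (f : Finset (Fin n) → k) (G : Finset (Fin n)) :
    eps v f G = if v ∈ G then sgn k (G.erase v) v * f (G.erase v) else 0 := rfl

lemma Dd_iota (v : Fin n) (f : Finset (Fin n) → k) (G : Finset (Fin n)) :
    Dd (iota v f) G = - iota v (Dd f) G := by
  rw [Dd_apply, iota_apply]
  by_cases hv : v ∈ G
  · rw [if_neg (not_not_intro hv), neg_zero]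
    refine Finset.sum_eq_zero fun x _ => ?_
    split_ifs with h1
    · rfl
    · rw [iota_apply, if_neg (not_not_intro (Finset.mem_insert_of_mem hv)), mul_zero]

  · rw [if_pos hv, Dd_apply, Finset.mul_sum, ← Finset.sum_neg_distrib]
    refine Finset.sum_congr rfl fun x _ => ?_
    by_cases hx : x ∈ G
    · rw [if_neg (not_not_intro hx),
        if_neg (not_not_intro (Finset.mem_insert_of_mem hx)), mul_zero, neg_zero]
    · by_cases hxv : x = v
      · subst hxv
        simp [iota_apply]
      · have h2 : v ∉ insert x G := by
          simp only [Finset.mem_insert, not_or]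
          exact ⟨fun h => hxv h.symm, hv⟩
        have h3 : x ∉ insert v G := by
          simp only [Finset.mem_insert, not_or]
          exact ⟨hxv, hx⟩
        rw [if_pos hx, iota_apply, if_pos h2, if_pos h3, Finset.insert_comm]
        have key := sgn_key (k := k) hx hv hxv
        linear_combination f (insert x (insert v G)) * key


lemma Dd_eps (v : Fin n) (f : Finset (Fin n) → k) (G : Finset (Fin n)) :
    Dd (eps v f) G = f G - eps v (Dd f) G := by
  rw [Dd_apply, eps_apply]
  by_cases hv : v ∈ G
  · rw [if_pos hv]
    set H := G.erase v with hH
    have hvH : v ∉ H := Finset.notMem_erase v G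
    have hG : insert v H = G := Finset.insert_erase hv
    rw [Dd_apply]
    have hL : (∑ x : Fin n, if x ∉ G then sgn k G x * eps v f (insert x G) else 0)
        = ∑ x ∈ Finset.univ.erase v, if x ∉ G then sgn k G x * eps v f (insert x G) else 0 := by
      rw [← Finset.add_sum_erase Finset.univ _ (Finset.mem_univ v), if_neg (not_not_intro hv),
        zero_add]
    rw [hL]
    rw [← Finset.add_sum_erase Finset.univ _ (Finset.mem_univ v)]
    rw [if_pos hvH, hG]
    rw [mul_add, ← mul_assoc, sgn_sq, one_mul, sub_add_eq_sub_sub, sub_self, zero_sub,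
      Finset.mul_sum, ← Finset.sum_neg_distrib]
    refine Finset.sum_congr rfl fun x hx => ?_
    have hxv : x ≠ v := Finset.ne_of_mem_erase hx
    by_cases hxG : x ∈ G
    · have hxH : x ∈ H := Finset.mem_erase.2 ⟨hxv, hxG⟩
      rw [if_neg (not_not_intro hxG), if_neg (not_not_intro hxH), mul_zero, neg_zero]
    · have hxH : x ∉ H := fun hm => hxG (Finset.mem_of_mem_erase hm)
      rw [if_pos hxG, if_pos hxH, eps_apply,
        if_pos (Finset.mem_insert_of_mem hv),
        Finset.erase_insert_of_ne hxv, ← hH, ← hG]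
      have key := sgn_key (k := k) hxH hvH hxv
      have ha := sgn_sq (k := k) H x
      have hd := sgn_sq (k := k) (insert v H) x
      linear_combination f (insert x H) * (sgn k H x * sgn k (insert v H) x * key)
        - f (insert x H) * (sgn k (insert x H) v * sgn k (insert v H) x) * ha
        - f (insert x H) * (sgn k H v * sgn k H x) * hd
  · rw [if_neg hv, sub_zero]
    rw [Finset.sum_eq_single_of_mem v (Finset.mem_univ v)]
    · rw [if_pos hv, eps_apply, if_pos (Finset.mem_insert_self v G), Finset.erase_insert hv,
        ← mul_assoc, sgn_sq, one_mul]
    · intro x _ hxv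
      by_cases hxG : x ∈ G
      · rw [if_neg (not_not_intro hxG)]
      · rw [if_pos hxG, eps_apply, if_neg (by
          simp only [Finset.mem_insert, not_or]
          exact ⟨fun h => hxv h.symm, hv⟩), mul_zero]


noncomputable def Rv (v : Fin n) (f : Finset (Fin n) → k) : Finset (Fin n) → k := fun G =>
  if v ∈ G then 0 else f G

noncomputable def ind (M : Finset (Fin n)) : Finset (Fin n) → k := fun G =>
  if G = M then 1 else 0

lemma Rv_apply (v : Fin n) (f : Finset (Fin n) → k) (G : Finset (Fin n)) :
    Rv v f G = if v ∈ G then 0 else f G := rfl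

lemma ind_apply (M G : Finset (Fin n)) : (ind M : Finset (Fin n) → k) G = if G = M then 1 else 0 := rfl

lemma Dd_add (f g : Finset (Fin n) → k) (G : Finset (Fin n)) :
    Dd (fun G => f G + g G) G = Dd f G + Dd g G := by
  simp only [Dd_apply, ← Finset.sum_add_distrib]
  refine Finset.sum_congr rfl fun x _ => ?_
  split_ifs with h <;> ring

lemma Dd_sub (f g : Finset (Fin n) → k) (G : Finset (Fin n)) :
    Dd (fun G => f G - g G) G = Dd f G - Dd g G := by
  simp only [Dd_apply, ← Finset.sum_sub_distrib]
  refine Finset.sum_congr rfl fun x _ => ?_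
  split_ifs with h <;> ring

lemma Dd_smul (r : k) (f : Finset (Fin n) → k) (G : Finset (Fin n)) :
    Dd (fun G => r * f G) G = r * Dd f G := by
  simp only [Dd_apply, Finset.mul_sum]
  refine Finset.sum_congr rfl fun x _ => ?_
  split_ifs with h <;> ring

lemma Dd_zero : Dd (0 : Finset (Fin n) → k) = 0 := by
  funext G
  simp [Dd_apply]

lemma decomp (v : Fin n) (f : Finset (Fin n) → k) (G : Finset (Fin n)) :
    f G = Rv v f G + eps v (iota v f) G := by
  rw [Rv_apply, eps_apply]
  by_cases hv : v ∈ G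
  · rw [if_pos hv, if_pos hv, zero_add, iota_apply,
      if_pos (Finset.notMem_erase v G), Finset.insert_erase hv, ← mul_assoc, sgn_sq, one_mul]
  · rw [if_neg hv, if_neg hv, add_zero]

lemma DD_ind (M : Finset (Fin n)) : Dd (Dd (ind M : Finset (Fin n) → k)) = 0 := by
  induction M using Finset.strongInduction with
  | _ M IH =>
  rcases M.eq_empty_or_nonempty with rfl | ⟨v, hv⟩
  · have h0 : Dd (ind (∅ : Finset (Fin n)) : Finset (Fin n) → k) = 0 := by
      funext G
      rw [Dd_apply]
      refine Finset.sum_eq_zero fun x _ => ?_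
      split_ifs with h
      · rfl
      · rw [ind_apply, if_neg (Finset.insert_ne_empty x G), mul_zero]
    rw [h0, Dd_zero]
  · set H := M.erase v with hH
    have hvH : v ∉ H := Finset.notMem_erase v M
    have hM : insert v H = M := Finset.insert_erase hv
    have hrep : (ind M : Finset (Fin n) → k) = fun G => sgn k H v * eps v (ind H) G := by
      funext G
      rw [ind_apply, eps_apply]
      by_cases hG : G = M
      · subst hG
        rw [if_pos rfl, if_pos hv, ← hH, ind_apply, if_pos rfl, mul_one, sgn_sq]
      · rw [if_neg hG]
        by_cases hvG : v ∈ G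
        · rw [if_pos hvG, ind_apply, if_neg, mul_zero, mul_zero]
          intro he
          exact hG (by rw [← Finset.insert_erase hvG, he, hM])
        · rw [if_neg hvG, mul_zero]
    have h1 : Dd (eps v (ind H) : Finset (Fin n) → k)
        = fun G => (ind H : Finset (Fin n) → k) G - eps v (Dd (ind H)) G :=
      funext fun G => Dd_eps v (ind H) G
    funext G
    rw [hrep]
    rw [show Dd (fun G => sgn k H v * eps v (ind H) G)
        = fun G => sgn k H v * Dd (eps v (ind H)) G from funext fun G => Dd_smul _ _ G]
    rw [Dd_smul, h1, Dd_sub, Dd_eps, IH H (Finset.erase_ssubset hv)]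
    simp [eps_apply]



lemma boundary_apply (Δ' : Set (Finset (Fin n))) (q : ℤ) (f : Chains k Δ' q) :
    boundary k Δ' q f = boundaryFun k Δ' q f := rfl

lemma chainsCongr_apply (Δ' : Set (Finset (Fin n))) {p q : ℤ} (h : p = q) (f : Chains k Δ' p)
    (F : {F : Finset (Fin n) // F ∈ Δ' ∧ (F.card : ℤ) = q + 1}) :
    chainsCongr k Δ' h f F = f ⟨F.1, F.2.1, by rw [h]; exact F.2.2⟩ := by
  subst h; rfl

lemma boundary_eq_Dd (Δ' : Set (Finset (Fin n))) (q : ℤ)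
    (f : Chains k Δ' q) (g : Finset (Fin n) → k)
    (hg1 : ∀ (G : Finset (Fin n)) (h : G ∈ Δ' ∧ (G.card : ℤ) = q + 1), g G = f ⟨G, h⟩)
    (hg2 : ∀ G : Finset (Fin n), ¬ (G ∈ Δ' ∧ (G.card : ℤ) = q + 1) → g G = 0)
    (G : {F : Finset (Fin n) // F ∈ Δ' ∧ (F.card : ℤ) = q - 1 + 1}) :
    boundary k Δ' q f G = Dd g G.1 := by
  rw [boundary_apply]
  show (∑ x : Fin n, _) = _
  rw [Dd_apply]
  refine Finset.sum_congr rfl fun x _ => ?_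
  by_cases hx : x ∉ G.1
  · by_cases hmem : insert x G.1 ∈ Δ'
    · rw [dif_pos ⟨hx, hmem⟩, if_pos hx]
      have hcard : ((insert x G.1).card : ℤ) = q + 1 := by
        rw [Finset.card_insert_of_notMem hx]
        have := G.2.2
        push_cast at this ⊢
        omega
      rw [hg1 (insert x G.1) ⟨hmem, hcard⟩]
      rfl
    · rw [dif_neg (fun hc => hmem hc.2), if_pos hx,
        hg2 (insert x G.1) (fun hc => hmem hc.1), mul_zero]
  · rw [dif_neg (fun hc => hx hc.1), if_neg hx]

/-- faces of `link Δ T` contained in `W` -/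
def LW (Δ : Set (Finset (Fin n))) (T W : Finset (Fin n)) : Set (Finset (Fin n)) :=
  {F | F ∈ link Δ T ∧ F ⊆ W}

lemma link_down {Δ : Set (Finset (Fin n))} (hΔ : IsComplex Δ) {T F G : Finset (Fin n)}
    (hF : F ∈ link Δ T) (hGF : G ⊆ F) : G ∈ link Δ T := by
  refine ⟨Finset.disjoint_of_subset_left hGF hF.1, hΔ (F ∪ T) hF.2 (G ∪ T) ?_⟩
  exact Finset.union_subset_union_left hGF

/-- chains supported on faces of `A` of cardinality `m` -/
def ChainOn (A : Set (Finset (Fin n))) (m : ℕ) (f : Finset (Fin n) → k) : Prop :=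
  ∀ G, f G ≠ 0 → G ∈ A ∧ G.card = m


lemma sdiff_insert_right_card {T W : Finset (Fin n)} {v : Fin n} {m : ℕ}
    (hv : v ∈ Finset.univ \ (T ∪ W)) (hm : (Finset.univ \ (T ∪ W)).card = m + 1) :
    (Finset.univ \ (T ∪ insert v W)).card = m := by
  have he : Finset.univ \ (T ∪ insert v W) = (Finset.univ \ (T ∪ W)).erase v := by
    ext x
    simp only [Finset.mem_sdiff, Finset.mem_union, Finset.mem_insert, Finset.mem_erase,
      Finset.mem_univ, true_and]
    tauto
  rw [he, Finset.card_erase_of_mem hv, hm]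
  omega

lemma sdiff_insert_left_card {T W : Finset (Fin n)} {v : Fin n} {m : ℕ}
    (hv : v ∈ Finset.univ \ (T ∪ W)) (hm : (Finset.univ \ (T ∪ W)).card = m + 1) :
    (Finset.univ \ (insert v T ∪ W)).card = m := by
  have he : Finset.univ \ (insert v T ∪ W) = (Finset.univ \ (T ∪ W)).erase v := by
    ext x
    simp only [Finset.mem_sdiff, Finset.mem_union, Finset.mem_insert, Finset.mem_erase,
      Finset.mem_univ, true_and]
    tauto
  rw [he, Finset.card_erase_of_mem hv, hm]
  omega

lemma key (Δ : Set (Finset (Fin n))) (hΔ : IsComplex Δ) (c : ℕ) :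
    ∀ (m : ℕ) (T W : Finset (Fin n)) (u : Finset (Fin n) → k),
      (Finset.univ \ (T ∪ W)).card = m → T ∈ Δ →
      ChainOn (LW Δ T W) c u → Dd u = 0 →
      (¬ ∃ w, ChainOn (LW Δ T W) (c + 1) w ∧ Dd w = u) →
      ∃ S ∈ Δ, ¬ Subsingleton (ReducedHomology k (link Δ S) ((c : ℤ) - 1)) := by
  intro m
  induction m with
  | zero =>
    intro T W u hm hT hu hDu hnb
    classical
    have hTW : ∀ x : Fin n, x ∈ T ∪ W := by
      have h0 : Finset.univ \ (T ∪ W) = ∅ := Finset.card_eq_zero.1 hm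
      intro x
      by_contra hx
      have hmem : x ∈ Finset.univ \ (T ∪ W) := Finset.mem_sdiff.2 ⟨Finset.mem_univ x, hx⟩
      rw [h0] at hmem
      exact absurd hmem (Finset.notMem_empty x)
    have hLW : ∀ G, G ∈ link Δ T → G ⊆ W := by
      intro G hG x hx
      rcases Finset.mem_union.1 (hTW x) with h | h
      · exact absurd h (Finset.disjoint_left.1 hG.1 hx)
      · exact h
    refine ⟨T, hT, ?_⟩
    intro hss
    set L : Set (Finset (Fin n)) := link Δ T with hL
    set pp : ℤ := (c : ℤ) - 1 with hpp
    set u' : Chains k L pp := (fun F => u F.1) with hu'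
    have h1 : u' ∈ cycles k L pp := by
      rw [cycles, LinearMap.mem_ker]
      funext G
      have hb := boundary_eq_Dd (k := k) L pp u' u
        (fun G h => rfl)
        (fun G hGn => by
          by_contra hne
          obtain ⟨⟨hl, hs⟩, hcard⟩ := hu G hne
          refine hGn ⟨hl, ?_⟩
          rw [hpp]
          push_cast
          omega)
        G
      rw [hb, hDu]
      rfl
    have h2 : u' ∈ boundaries k L pp := by
      have heq : (Submodule.Quotient.mk (⟨u', h1⟩ : cycles k L pp) :
          ReducedHomology k L pp) = 0 := Subsingleton.elim _ _
      have hmem := (Submodule.Quotient.mk_eq_zero _).1 heq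
      simpa [Submodule.mem_comap] using hmem
    rw [boundaries, LinearMap.mem_range] at h2
    obtain ⟨w', hw'⟩ := h2
    set wg : Finset (Fin n) → k :=
      fun G => if h : G ∈ L ∧ (G.card : ℤ) = pp + 1 + 1 then w' ⟨G, h⟩ else 0 with hwg
    apply hnb
    refine ⟨wg, ?_, ?_⟩
    · intro G hG
      have hcond : G ∈ L ∧ (G.card : ℤ) = pp + 1 + 1 := by
        by_contra hc
        apply hG
        show (if h : G ∈ L ∧ (G.card : ℤ) = pp + 1 + 1 then w' ⟨G, h⟩ else 0) = 0
        rw [dif_neg hc]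
      refine ⟨⟨hcond.1, hLW G hcond.1⟩, ?_⟩
      have hc2 := hcond.2
      rw [hpp] at hc2
      push_cast at hc2 ⊢
      omega
    · funext G
      by_cases hGc : G ∈ L ∧ (G.card : ℤ) = pp + 1
      · have hb := boundary_eq_Dd (k := k) L (pp + 1) w' wg
          (fun G h => by show (if h' : G ∈ L ∧ (G.card : ℤ) = pp + 1 + 1 then w' ⟨G, h'⟩ else 0) = w' ⟨G, h⟩; rw [dif_pos h])
          (fun G hGn => by show (if h' : G ∈ L ∧ (G.card : ℤ) = pp + 1 + 1 then w' ⟨G, h'⟩ else 0) = 0; rw [dif_neg hGn])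
          ⟨G, hGc.1, by have := hGc.2; omega⟩
        have hw2 := congr_fun hw' (⟨G, hGc⟩ :
          {F : Finset (Fin n) // F ∈ L ∧ (F.card : ℤ) = pp + 1})
        rw [LinearMap.comp_apply] at hw2
        have hw3 : chainsCongr k L (show pp + 1 - 1 = pp by ring)
            ((boundary k L (pp + 1)) w') ⟨G, hGc⟩ = u' ⟨G, hGc⟩ := hw2
        rw [chainsCongr_apply] at hw3
        exact hb.symm.trans hw3
      · have hug : u G = 0 := by
          by_contra hne
          obtain ⟨⟨hl, hs⟩, hcard⟩ := hu G hne
          refine hGc ⟨hl, ?_⟩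
          rw [hpp]
          push_cast
          omega
        rw [hug, Dd_apply]
        refine Finset.sum_eq_zero fun x _ => ?_
        split_ifs with hx
        · rfl
        · have hz : wg (insert x G) = 0 := by
            show (if h : insert x G ∈ L ∧ ((insert x G).card : ℤ) = pp + 1 + 1
              then w' ⟨insert x G, h⟩ else 0) = 0
            rw [dif_neg]
            rintro ⟨hmem, hcard⟩
            refine hGc ⟨link_down hΔ hmem (Finset.subset_insert x G), ?_⟩
            have hci := Finset.card_insert_of_notMem hx
            push_cast at hcard ⊢
            omega
          rw [hz, mul_zero]
  | succ m IH =>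
    intro T W u hm hT hu hDu hnb
    have hvex : (Finset.univ \ (T ∪ W)).Nonempty := by
      rw [← Finset.card_pos, hm]; omega
    obtain ⟨v, hv⟩ := hvex
    have hvTW := Finset.mem_sdiff.1 hv
    have hvT : v ∉ T := fun h => hvTW.2 (Finset.mem_union_left _ h)
    have hvW : v ∉ W := fun h => hvTW.2 (Finset.mem_union_right _ h)
    by_cases hw : ∃ w, ChainOn (LW Δ T (insert v W)) (c + 1) w ∧ Dd w = u
    · obtain ⟨w, hwchain, hwD⟩ := hw
      -- w must have a face containing v
      have hG0 : ∃ G0, w G0 ≠ 0 ∧ v ∈ G0 := by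
        by_contra hcon
        push_neg at hcon
        refine hnb ⟨w, fun G hG => ?_, hwD⟩
        obtain ⟨⟨hlink, hsub⟩, hcard⟩ := hwchain G hG
        refine ⟨⟨hlink, fun x hx => ?_⟩, hcard⟩
        rcases Finset.mem_insert.1 (hsub hx) with rfl | h
        · exact absurd hx (hcon G hG)
        · exact h
      obtain ⟨G0, hG0w, hvG0⟩ := hG0
      obtain ⟨⟨hG0link, hG0sub⟩, hG0card⟩ := hwchain G0 hG0w
      have hT' : insert v T ∈ Δ := by
        refine hΔ (G0 ∪ T) hG0link.2 (insert v T) ?_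
        intro x hx
        rcases Finset.mem_insert.1 hx with rfl | h
        · exact Finset.mem_union_left _ hvG0
        · exact Finset.mem_union_right _ h
      set a : Finset (Fin n) → k := iota v w with ha
      have hDa : Dd a = 0 := by
        funext G
        rw [ha, Dd_iota, hwD, iota_apply]
        split_ifs with h
        · rw [neg_zero]; rfl
        · have hz : u (insert v G) = 0 := by
            by_contra hne
            exact hvW ((hu _ hne).1.2 (Finset.mem_insert_self v G))
          rw [hz, mul_zero, neg_zero]
          rfl
      have hachain : ChainOn (LW Δ (insert v T) W) c a := by
        intro G hG
        rw [ha, iota_apply] at hG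
        split_ifs at hG with hvG
        · exact absurd rfl hG
        · have hwne : w (insert v G) ≠ 0 := right_ne_zero_of_mul hG
          obtain ⟨⟨hlink, hsub⟩, hcard⟩ := hwchain (insert v G) hwne
          constructor
          · constructor
            · constructor
              · rw [Finset.disjoint_insert_right]
                refine ⟨hvG, Finset.disjoint_of_subset_left (Finset.subset_insert v G) hlink.1⟩
              · rw [Finset.union_insert, ← Finset.insert_union]
                exact hlink.2
            · intro x hx
              have hx2 := hsub (Finset.mem_insert_of_mem hx)
              rcases Finset.mem_insert.1 hx2 with rfl | h
              · exact absurd hx hvG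
              · exact h
          · have := Finset.card_insert_of_notMem hvG
            omega
      have hanb : ¬ ∃ b, ChainOn (LW Δ (insert v T) W) (c + 1) b ∧ Dd b = a := by
        rintro ⟨b, hbchain, hbD⟩
        refine hnb ⟨fun G => Rv v w G + b G, ?_, ?_⟩
        · intro G hG
          have hG' : Rv v w G + b G ≠ 0 := hG
          have hcases : Rv v w G ≠ 0 ∨ b G ≠ 0 := by
            by_contra hcc
            push_neg at hcc
            rw [hcc.1, hcc.2, add_zero] at hG'
            exact hG' rfl
          rcases hcases with hR | hb
          · rw [Rv_apply] at hR
            split_ifs at hR with hvG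
            · exact absurd rfl hR
            · obtain ⟨⟨hlink, hsub⟩, hcard⟩ := hwchain G hR
              refine ⟨⟨hlink, fun x hx => ?_⟩, hcard⟩
              rcases Finset.mem_insert.1 (hsub hx) with rfl | h
              · exact absurd hx hvG
              · exact h
          · obtain ⟨⟨hlink, hsub⟩, hcard⟩ := hbchain G hb
            refine ⟨⟨⟨Finset.disjoint_of_subset_right (Finset.subset_insert v T) hlink.1,
              hΔ (G ∪ insert v T) hlink.2 (G ∪ T)
                (Finset.union_subset_union_right (Finset.subset_insert v T))⟩, hsub⟩, hcard⟩
        · funext G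
          rw [Dd_add (Rv v w) b G, hbD]
          have hwdec : w = fun G => Rv v w G + eps v a G := by
            funext G'
            rw [ha]
            exact decomp v w G'
          have h2 : Dd w G = Dd (Rv v w) G + Dd (eps v a) G := by
            conv_lhs => rw [hwdec]
            exact Dd_add _ _ G
          rw [Dd_eps, hDa] at h2
          have h3 : eps v (0 : Finset (Fin n) → k) G = 0 := by simp [eps_apply]
          rw [h3, sub_zero, hwD] at h2
          have : Dd (Rv v w) G = u G - a G := by linear_combination -h2
          rw [this]
          ring
      exact IH (insert v T) W a (sdiff_insert_left_card hv hm) hT' hachain hDa hanb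
    · refine IH T (insert v W) u (sdiff_insert_right_card hv hm) hT ?_ hDu hw
      intro G hG
      obtain ⟨⟨hlink, hsub⟩, hcard⟩ := hu G hG
      exact ⟨⟨hlink, hsub.trans (Finset.subset_insert v W)⟩, hcard⟩

end Aux
/-- if `Δ` is neither the full simplex nor empty, some link has
nonvanishing reduced homology in degree `c - 1`. -/
theorem stmt3 (k : Type) [Field k] {n : ℕ} (Δ : Set (Finset (Fin n)))
    (hΔ : IsComplex Δ) (hne : Δ ≠ ∅)
    (hfull : (Finset.univ : Finset (Fin n)) ∉ Δ)
    (c : ℕ) (hc : IsFrame Δ c) :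
    ∃ S ∈ Δ, ¬ Subsingleton (ReducedHomology k (link Δ S) ((c : ℤ) - 1)) := by
  classical
  obtain ⟨hframe, M0, hM0card, hM0⟩ := hc
  have hM0ne : M0.Nonempty := by rw [← Finset.card_pos, hM0card]; omega
  obtain ⟨x0, hx0⟩ := hM0ne
  set u0 : Finset (Fin n) → k := Dd (ind M0) with hu0
  have hu0chain : ChainOn (LW Δ ∅ M0) c u0 := by
    intro G hG
    rw [hu0, Dd_apply] at hG
    obtain ⟨x, -, hx⟩ := Finset.exists_ne_zero_of_sum_ne_zero hG
    have hxG : x ∉ G := by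
      by_contra h
      rw [if_neg (not_not_intro h)] at hx
      exact hx rfl
    rw [if_pos hxG] at hx
    have hind : (ind M0 : Finset (Fin n) → k) (insert x G) ≠ 0 := right_ne_zero_of_mul hx
    have hins : insert x G = M0 := by
      rw [ind_apply] at hind
      by_contra hne2
      rw [if_neg hne2] at hind
      exact hind rfl
    have hsub : G ⊆ M0 := hins ▸ Finset.subset_insert x G
    have hcard : G.card = c := by
      have h2 := Finset.card_insert_of_notMem hxG
      rw [hins, hM0card] at h2
      omega
    exact ⟨⟨⟨Finset.disjoint_empty_right G,
      by rw [Finset.union_empty]; exact hframe G (le_of_eq hcard)⟩, hsub⟩, hcard⟩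
  have hDu0 : Dd u0 = 0 := by rw [hu0]; exact DD_ind M0
  have hu0ne : u0 (M0.erase x0) ≠ 0 := by
    rw [hu0, Dd_apply]
    rw [Finset.sum_eq_single_of_mem x0 (Finset.mem_univ x0)]
    · rw [if_pos (Finset.notMem_erase x0 M0), ind_apply, if_pos (Finset.insert_erase hx0),
        mul_one]
      exact sgn_ne_zero _ _
    · intro x _ hxx0
      split_ifs with h
      · rfl
      · rw [ind_apply, if_neg, mul_zero]
        intro he
        have hmem : x0 ∈ insert x (M0.erase x0) := by rw [he]; exact hx0
        rcases Finset.mem_insert.1 hmem with h1 | h1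
        · exact hxx0 h1.symm
        · exact Finset.notMem_erase x0 M0 h1
  have hnb0 : ¬ ∃ w, ChainOn (LW Δ ∅ M0) (c + 1) w ∧ Dd w = u0 := by
    rintro ⟨w, hwc, hwD⟩
    have hw0 : w = 0 := by
      funext G
      by_contra hne2
      obtain ⟨⟨hlink, hsub⟩, hcard⟩ := hwc G hne2
      have hGM : G = M0 := Finset.eq_of_subset_of_card_le hsub (by omega)
      subst hGM
      have : G ∈ Δ := by
        have h3 := hlink.2
        rwa [Finset.union_empty] at h3
      exact hM0 this
    rw [hw0, Dd_zero] at hwD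
    apply hu0ne
    rw [← hwD]
    rfl
  have hemp : (∅ : Finset (Fin n)) ∈ Δ := hframe ∅ (by simp)
  exact key (k := k) Δ hΔ c ((Finset.univ \ ((∅ : Finset (Fin n)) ∪ M0)).card) ∅ M0 u0 rfl
    hemp hu0chain hDu0 hnb0

end SCx
end
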